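/- Let φ, ψ : ℝ → [0,∞) be convex functions, differentiable everywhere on ℝ, such that φ(0) = ψ(0) and φ(α) ≤ ψ(α) for all α ∈ ℝ, and suppose φ' and ψ' are absolutely continuous on [0,1]. If φ''(α) → ∞ as α → 0 along a subset of [0,1] of full Lebesgue measure (i.e., there is a measurable set E ⊆ [0,1] of Lebesgue measure 1 on which φ'' exists and φ''(α) → ∞ as α → 0, α ∈ E), then for every C > 0 the set {α ∈ [0,1] : ψ''(α) exists and ψ''(α) ≤ C} has Lebesgue measure strictly less than 1. -/

import Mathlib

open MeasureTheory Filter Topology Set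
open scoped ENNReal NNReal

noncomputable section

/-- `M` is an Orlicz function: even, continuous, convex, `M 0 = 0`, `M 1 = 1`,
`M u / u → 0` as `u → 0⁺` and `M u / u → ∞` as `u → ∞`. -/
def IsOrliczFn (M : ℝ → ℝ) : Prop :=
  (∀ u : ℝ, M (-u) = M u) ∧ Continuous M ∧ ConvexOn ℝ Set.univ M ∧
    M 0 = 0 ∧ M 1 = 1 ∧
    Filter.Tendsto (fun u => M u / u) (nhdsWithin 0 (Set.Ioi 0)) (nhds 0) ∧
    Filter.Tendsto (fun u => M u / u) Filter.atTop Filter.atTop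

/-- The Δ₂ condition near zero: `M (2u) ≤ k · M u` for all `|u| ≤ u₀`. -/
def Delta2Zero (M : ℝ → ℝ) : Prop :=
  ∃ k > (0:ℝ), ∃ u₀ > (0:ℝ), ∀ u : ℝ, |u| ≤ u₀ → M (2 * u) ≤ k * M u

/-- The Δ₂₊ condition near zero: `M` is twice differentiable (away from the origin for
the second derivative), satisfies Δ₂ near zero, and `u·M''(u)/M'(u) < β` for `0 < u ≤ u₀`. -/
def Delta2PlusZero (M : ℝ → ℝ) : Prop :=
  (∀ u : ℝ, DifferentiableAt ℝ M u) ∧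
  (∀ u : ℝ, u ≠ 0 → DifferentiableAt ℝ (deriv M) u) ∧
  Delta2Zero M ∧
  ∃ β > (0:ℝ), ∃ u₀ > (0:ℝ), ∀ u : ℝ, 0 < u → u ≤ u₀ →
    u * deriv (deriv M) u / deriv M u < β

/-- The modular `ρ_M(x) = ∑ M(x_j)` of a real sequence, valued in `ℝ≥0∞`. -/
def rhoM (M : ℝ → ℝ) (x : ℕ → ℝ) : ℝ≥0∞ := ∑' j, ENNReal.ofReal (M (x j))

/-- Membership in the Orlicz sequence space `ℓ_M`: `ρ_M(c·x) < ∞` for some `c > 0`. -/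
def MemLM (M : ℝ → ℝ) (x : ℕ → ℝ) : Prop :=
  ∃ c > (0:ℝ), rhoM M (fun j => c * x j) < ⊤

/-- The Luxemburg norm `‖x‖_M = inf { l > 0 : ρ_M(x/l) ≤ 1 }`. -/
def luxNorm (M : ℝ → ℝ) (x : ℕ → ℝ) : ℝ :=
  sInf {l : ℝ | 0 < l ∧ rhoM M (fun j => x j / l) ≤ 1}

/-- The right derivative of `M` at `t`. -/
def rightDeriv (M : ℝ → ℝ) (t : ℝ) : ℝ := derivWithin M (Set.Ici t) t

/-- The right inverse `q` of the right derivative of `M`. -/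
def rightInvDeriv (M : ℝ → ℝ) (s : ℝ) : ℝ :=
  sSup {t : ℝ | 0 ≤ t ∧ rightDeriv M t ≤ s}

/-- The complementary Orlicz function `M*(v) = ∫₀^{|v|} q(s) ds`. -/
def conjM (M : ℝ → ℝ) (v : ℝ) : ℝ := ∫ s in (0:ℝ)..|v|, rightInvDeriv M s

/-- The Orlicz norm `‖x‖_M^O = sup { ∑ x_j y_j : ρ_{M*}(y) ≤ 1 }`. -/
def orlNorm (M : ℝ → ℝ) (x : ℕ → ℝ) : ℝ :=
  sSup {r : ℝ | ∃ y : ℕ → ℝ, rhoM (conjM M) y ≤ 1 ∧ r = ∑' j, x j * y j}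

/-- The Matuszewska–Orlicz index
`α⁰_M = sup { p : sup { M(λt)/(tᵖ·M(λ)) : λ,t ∈ (0,1] } < ∞ }`. -/
def matIndex (M : ℝ → ℝ) : ℝ :=
  sSup {p : ℝ | ∃ K : ℝ, ∀ lam ∈ Set.Ioc (0:ℝ) 1, ∀ t ∈ Set.Ioc (0:ℝ) 1,
    M (lam * t) / (t ^ p * M lam) ≤ K}

/-- `h` is absolutely continuous on `[a,b]`: it is the integral of an integrable function. -/
def AbsContOn (h : ℝ → ℝ) (a b : ℝ) : Prop :=
  ∃ g : ℝ → ℝ, IntervalIntegrable g MeasureTheory.volume a b ∧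
    ∀ x ∈ Set.Icc a b, h x = h a + ∫ s in a..x, g s

/-- `M` belongs to the class `AC^k` at zero. -/
def MemACk (M : ℝ → ℝ) (k : ℕ) : Prop :=
  (k : ℝ) < matIndex M ∧
  (∀ a b : ℝ, AbsContOn (iteratedDeriv k M) a b) ∧
  ∃ c > (0:ℝ), ∀ᵐ t ∂(MeasureTheory.volume.restrict (Set.Ici (0:ℝ))),
    t ^ (k + 1) * |iteratedDeriv (k + 1) M t| ≤ c * M (c * t)

/-- The `ℓ∞` norm of a sequence, as an extended real. -/
def linftyE (x : ℕ → ℝ) : ℝ≥0∞ := ⨆ j, ENNReal.ofReal |x j|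

/-- `P` maps `ℓ_M` into itself and is additive and homogeneous on `ℓ_M`. -/
def IsLinearOnLM (M : ℝ → ℝ) (P : (ℕ → ℝ) → (ℕ → ℝ)) : Prop :=
  (∀ f, MemLM M f → MemLM M (P f)) ∧
  (∀ f g, MemLM M f → MemLM M g → P (f + g) = P f + P g) ∧
  (∀ (c : ℝ) f, MemLM M f → P (c • f) = c • P f)

/-- `P` is an averaging projection given by mutually disjointly supported `u_j` and
biorthogonal bounded linear functionals `u_j*` (boundedness w.r.t. the norm `Nrm`),
and moreover the trichotomy on the `u_j` and `M` holds. -/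
def IsAveragingWithTrichotomy (M : ℝ → ℝ) (Nrm : (ℕ → ℝ) → ℝ)
    (P : (ℕ → ℝ) → (ℕ → ℝ)) : Prop :=
  ∃ (J : Type) (u : J → ℕ → ℝ) (ustar : J → (ℕ → ℝ) → ℝ),
    (∀ j, MemLM M (u j)) ∧
    (Pairwise fun j k => Disjoint (Function.support (u j)) (Function.support (u k))) ∧
    (∀ j, ∀ f g, MemLM M f → MemLM M g → ustar j (f + g) = ustar j f + ustar j g) ∧
    (∀ j, ∀ (c : ℝ) f, MemLM M f → ustar j (c • f) = c * ustar j f) ∧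
    (∀ j, ∃ C : ℝ, ∀ f, MemLM M f → |ustar j f| ≤ C * Nrm f) ∧
    (∀ j k, j ≠ k → ustar j (u k) = 0) ∧
    (∀ j, ustar j (u j) = 1) ∧
    (∀ f, MemLM M f → ∀ n, P f n = ∑' j, ustar j f * u j n) ∧
    (((∀ j, (Function.support (u j)).Finite) ∧
        ∀ j, ∀ k ∈ Function.support (u j), ∀ l ∈ Function.support (u j),
          |u j k| = |u j l|) ∨
      (∃ p : ℝ, 1 < p ∧ ∃ C : ℝ, ∀ t : ℝ, 0 ≤ t →
        ENNReal.ofReal t ≤ ⨆ j, linftyE (u j) → M t = C * t ^ p) ∨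
      (∃ p : ℝ, 1 < p ∧ ∃ C₁ C₂ γ : ℝ, 0 < C₁ ∧ 0 < C₂ ∧ 0 < γ ∧
        (∀ t : ℝ, 0 ≤ t → ENNReal.ofReal t ≤ ⨆ j, linftyE (u j) →
          C₂ * t ^ p ≤ M t ∧ M t ≤ C₁ * t ^ p) ∧
        (∀ j, linftyE (u j) < ⊤) ∧
        (∀ j, ∀ k ∈ Function.support (u j), ∃ m : ℤ,
          |u j k| = γ ^ m * (linftyE (u j)).toReal)))

/-- The norm `Nrm` on the Orlicz sequence space `ℓ_M` is `UF^k`-smooth: there exist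
continuous symmetric `j`-linear forms `T^j_f`, `1 ≤ j ≤ k`, such that
`‖f + αg‖ = ‖f‖ + ∑_{j=1}^k αʲ T^j_f(g,…,g) + o(|α|ᵏ)` uniformly for `f, g` in the
unit sphere. (`T f j` represents the `(j+1)`-linear form `T^{j+1}_f`.) -/
def UFkSmooth (M : ℝ → ℝ) (Nrm : (ℕ → ℝ) → ℝ) (k : ℕ) : Prop :=
  ∃ T : (ℕ → ℝ) → (j : ℕ) → ((Fin (j + 1) → ℕ → ℝ) → ℝ),
    (∀ f, MemLM M f → Nrm f = 1 → ∀ j < k,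
      ((∀ (i : Fin (j + 1)) (v : Fin (j + 1) → ℕ → ℝ) (w : ℕ → ℝ),
          (∀ i', MemLM M (v i')) → MemLM M w →
          T f j (Function.update v i (v i + w)) =
            T f j v + T f j (Function.update v i w)) ∧
        (∀ (i : Fin (j + 1)) (v : Fin (j + 1) → ℕ → ℝ) (c : ℝ),
          (∀ i', MemLM M (v i')) →
          T f j (Function.update v i (c • v i)) = c * T f j v) ∧
        (∀ (σ : Equiv.Perm (Fin (j + 1))) (v : Fin (j + 1) → ℕ → ℝ),
          (∀ i', MemLM M (v i')) → T f j (fun i' => v (σ i')) = T f j v) ∧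
        (∃ C : ℝ, ∀ v : Fin (j + 1) → ℕ → ℝ, (∀ i', MemLM M (v i')) →
          |T f j v| ≤ C * ∏ i' : Fin (j + 1), Nrm (v i')))) ∧
    ∀ ε > (0:ℝ), ∃ δ > (0:ℝ), ∀ f, MemLM M f → Nrm f = 1 →
      ∀ g, MemLM M g → Nrm g = 1 → ∀ α : ℝ, α ≠ 0 → |α| ≤ δ →
        |Nrm (f + α • g) - Nrm f -
          ∑ j ∈ Finset.range k, α ^ (j + 1) * T f j (fun _ => g)| ≤ ε * |α| ^ k


lemma aux_ae_hasDerivAt (g : ℝ → ℝ) (hg : MeasureTheory.Integrable g) :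
    ∀ᵐ x, HasDerivAt (fun y => ∫ t in (0:ℝ)..y, g t) (g x) x := by
  filter_upwards [(IsUnifLocDoublingMeasure.vitaliFamily (volume : Measure ℝ) 1).ae_tendsto_average
    hg.locallyIntegrable] with x hx
  have hFsub : ∀ y : ℝ, (∫ t in (0:ℝ)..y, g t) - (∫ t in (0:ℝ)..x, g t) = ∫ t in x..y, g t :=
    fun y => intervalIntegral.integral_interval_sub_left hg.intervalIntegrable
      hg.intervalIntegrable
  rw [hasDerivAt_iff_tendsto_slope, slope_fun_def_field, ← nhdsLT_sup_nhdsGT,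
    tendsto_sup]
  constructor
  · apply (hx.comp (Real.tendsto_Icc_vitaliFamily_left x)).congr'
    filter_upwards [self_mem_nhdsWithin] with y (hy : y < x)
    show ⨍ t in Icc y x, g t = ((∫ t in (0:ℝ)..y, g t) - ∫ t in (0:ℝ)..x, g t) / (y - x)
    rw [hFsub, setAverage_eq, measureReal_def, Real.volume_Icc, intervalIntegral.integral_symm,
      intervalIntegral.integral_of_le hy.le, ← MeasureTheory.integral_Icc_eq_integral_Ioc,
      ENNReal.toReal_ofReal (by linarith), smul_eq_mul]
    have h1 : x - y ≠ 0 := by linarith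
    have h2 : y - x ≠ 0 := by linarith
    field_simp
    ring
  · apply (hx.comp (Real.tendsto_Icc_vitaliFamily_right x)).congr'
    filter_upwards [self_mem_nhdsWithin] with y (hy : x < y)
    show ⨍ t in Icc x y, g t = ((∫ t in (0:ℝ)..y, g t) - ∫ t in (0:ℝ)..x, g t) / (y - x)
    rw [hFsub, setAverage_eq, measureReal_def, Real.volume_Icc,
      intervalIntegral.integral_of_le hy.le, ← MeasureTheory.integral_Icc_eq_integral_Ioc,
      ENNReal.toReal_ofReal (by linarith), smul_eq_mul]
    have h2 : y - x ≠ 0 := by linarith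
    field_simp


lemma aux_ae_hasDerivAt_of_rep (h g : ℝ → ℝ)
    (hint : IntervalIntegrable g MeasureTheory.volume 0 1)
    (hrep : ∀ x ∈ Set.Icc (0:ℝ) 1, h x = h 0 + ∫ s in (0:ℝ)..x, g s) :
    ∀ᵐ x, x ∈ Set.Ioo (0:ℝ) 1 → HasDerivAt h (g x) x := by
  set g' : ℝ → ℝ := (Set.Ioc (0:ℝ) 1).indicator g with hg'def
  have hg'int : MeasureTheory.Integrable g' := by
    rw [hg'def, MeasureTheory.integrable_indicator_iff measurableSet_Ioc]
    rw [intervalIntegrable_iff_integrableOn_Ioc_of_le zero_le_one] at hint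
    exact hint
  filter_upwards [aux_ae_hasDerivAt g' hg'int] with x hx hxmem
  have hgx : g' x = g x := Set.indicator_of_mem (Set.mem_Ioc.mpr ⟨hxmem.1, hxmem.2.le⟩) g
  have heq : ∀ y ∈ Set.Icc (0:ℝ) 1, h y = h 0 + ∫ t in (0:ℝ)..y, g' t := by
    intro y hy
    rw [hrep y hy]
    congr 1
    rw [intervalIntegral.integral_of_le hy.1, intervalIntegral.integral_of_le hy.1]
    apply MeasureTheory.setIntegral_congr_fun measurableSet_Ioc
    intro t ht
    exact (Set.indicator_of_mem (Set.mem_Ioc.mpr ⟨ht.1, ht.2.trans hy.2⟩) g).symm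
  have hd : HasDerivAt (fun y => h 0 + ∫ t in (0:ℝ)..y, g' t) (g' x) x := hx.const_add (h 0)
  have hmem : Set.Icc (0:ℝ) 1 ∈ 𝓝 x := Icc_mem_nhds hxmem.1 hxmem.2
  have hee : h =ᶠ[𝓝 x] fun y => h 0 + ∫ t in (0:ℝ)..y, g' t := by
    filter_upwards [hmem] with y hy using heq y hy
  rw [← hgx]
  exact hd.congr_of_eventuallyEq hee

/-- if moreover `φ'` and `ψ'` are absolutely continuous on `[0,1]` and
`φ''(α) → ∞` as `α → 0` along a subset of `[0,1]` of full measure, then for every `C > 0`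
the set `{α ∈ [0,1] : ψ''(α) exists and ψ''(α) ≤ C}` has measure `< 1`. -/
theorem stmt2 (φ ψ : ℝ → ℝ)
    (hφ_nonneg : ∀ x : ℝ, 0 ≤ φ x) (hψ_nonneg : ∀ x : ℝ, 0 ≤ ψ x)
    (hφ_conv : ConvexOn ℝ Set.univ φ) (hψ_conv : ConvexOn ℝ Set.univ ψ)
    (hφ_diff : Differentiable ℝ φ) (hψ_diff : Differentiable ℝ ψ)
    (h0 : φ 0 = ψ 0) (hle : ∀ α : ℝ, φ α ≤ ψ α)
    (hφ_ac : AbsContOn (deriv φ) 0 1) (hψ_ac : AbsContOn (deriv ψ) 0 1)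
    (E : Set ℝ) (hE_sub : E ⊆ Set.Icc 0 1) (hE_meas : MeasurableSet E)
    (hE_vol : volume E = 1)
    (hE_diff : ∀ α ∈ E, DifferentiableAt ℝ (deriv φ) α)
    (hblow : Filter.Tendsto (fun α => deriv (deriv φ) α) (nhdsWithin 0 E) Filter.atTop) :
    ∀ C > (0:ℝ),
      volume {α ∈ Set.Icc (0:ℝ) 1 |
        DifferentiableAt ℝ (deriv ψ) α ∧ deriv (deriv ψ) α ≤ C} < 1 := by
  intro C hC
  by_contra hcon
  push_neg at hcon
  set A := {α ∈ Set.Icc (0:ℝ) 1 |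
      DifferentiableAt ℝ (deriv ψ) α ∧ deriv (deriv ψ) α ≤ C} with hAdef
  have hIcc_vol : volume (Set.Icc (0:ℝ) 1) = 1 := by simp
  have hA_sub : A ⊆ Set.Icc (0:ℝ) 1 := sep_subset _ _
  have hA_meas : MeasurableSet A := by
    apply measurableSet_Icc.inter
    exact (measurableSet_of_differentiableAt ℝ (deriv ψ)).inter
      ((measurable_deriv (deriv ψ)) measurableSet_Iic)
  have hA_vol : volume A = 1 :=
    le_antisymm (by rw [← hIcc_vol]; exact measure_mono hA_sub) hcon
  -- complements are null
  have hA_null : volume (Set.Icc (0:ℝ) 1 \ A) = 0 := by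
    rw [measure_diff hA_sub hA_meas.nullMeasurableSet (by simp [hA_vol]), hA_vol, hIcc_vol]
    simp
  have hE_null : volume (Set.Icc (0:ℝ) 1 \ E) = 0 := by
    rw [measure_diff hE_sub hE_meas.nullMeasurableSet (by simp [hE_vol]), hE_vol, hIcc_vol]
    simp
  have haeA : ∀ᵐ α : ℝ, α ∈ Set.Icc (0:ℝ) 1 → α ∈ A := by
    have := measure_eq_zero_iff_ae_notMem.mp hA_null
    filter_upwards [this] with α hα hmem
    by_contra hn; exact hα ⟨hmem, hn⟩
  have haeE : ∀ᵐ α : ℝ, α ∈ Set.Icc (0:ℝ) 1 → α ∈ E := by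
    have := measure_eq_zero_iff_ae_notMem.mp hE_null
    filter_upwards [this] with α hα hmem
    by_contra hn; exact hα ⟨hmem, hn⟩
  obtain ⟨gψ, hgψ_int, hgψ_rep⟩ := hψ_ac
  obtain ⟨gφ, hgφ_int, hgφ_rep⟩ := hφ_ac
  have haeψ := aux_ae_hasDerivAt_of_rep (deriv ψ) gψ hgψ_int hgψ_rep
  have haeφ := aux_ae_hasDerivAt_of_rep (deriv φ) gφ hgφ_int hgφ_rep
  -- a.e. bound for gψ on (0,1)
  have hgψ_le : ∀ᵐ t : ℝ, t ∈ Set.Ioo (0:ℝ) 1 → gψ t ≤ C := by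
    filter_upwards [haeψ, haeA] with t h1 h2 ht
    have hA' := h2 (Set.mem_Icc.mpr ⟨ht.1.le, ht.2.le⟩)
    have : deriv (deriv ψ) t = gψ t := (h1 ht).deriv
    rw [← this]
    exact hA'.2.2
  -- continuity of the derivatives on [0,1]
  have hIcc01 : Set.uIcc (0:ℝ) 1 = Set.Icc 0 1 := uIcc_of_le zero_le_one
  have contψ' : ContinuousOn (deriv ψ) (Set.Icc (0:ℝ) 1) := by
    have hc : ContinuousOn (fun y => deriv ψ 0 + ∫ t in (0:ℝ)..y, gψ t) (Set.Icc (0:ℝ) 1) := by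
      apply continuousOn_const.add
      have := intervalIntegral.continuousOn_primitive_interval' hgψ_int
        (by rw [hIcc01]; exact Set.left_mem_Icc.mpr zero_le_one)
      rwa [hIcc01] at this
    exact hc.congr fun y hy => hgψ_rep y hy
  have contφ' : ContinuousOn (deriv φ) (Set.Icc (0:ℝ) 1) := by
    have hc : ContinuousOn (fun y => deriv φ 0 + ∫ t in (0:ℝ)..y, gφ t) (Set.Icc (0:ℝ) 1) := by
      apply continuousOn_const.add
      have := intervalIntegral.continuousOn_primitive_interval' hgφ_int
        (by rw [hIcc01]; exact Set.left_mem_Icc.mpr zero_le_one)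
      rwa [hIcc01] at this
    exact hc.congr fun y hy => hgφ_rep y hy
  have h01ae : ∀ᵐ t : ℝ, t ≠ 0 ∧ t ≠ 1 := by
    have hv : volume ({0, 1} : Set ℝ) = 0 := (Set.toFinite _).measure_zero _
    filter_upwards [measure_eq_zero_iff_ae_notMem.mp hv] with t ht
    simp only [Set.mem_insert_iff, Set.mem_singleton_iff, not_or] at ht
    exact ht
  -- upper bound for ψ'
  have hψ'_le : ∀ x ∈ Set.Icc (0:ℝ) 1, deriv ψ x ≤ deriv ψ 0 + C * x := by
    intro x hx
    rw [hgψ_rep x hx]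
    have hintx : IntervalIntegrable gψ volume 0 x :=
      hgψ_int.mono_set (by rw [uIcc_of_le hx.1, hIcc01]; exact Set.Icc_subset_Icc le_rfl hx.2)
    have hmono : (∫ t in (0:ℝ)..x, gψ t) ≤ ∫ t in (0:ℝ)..x, C := by
      apply intervalIntegral.integral_mono_ae_restrict hx.1 hintx intervalIntegrable_const
      filter_upwards [ae_restrict_of_ae hgψ_le, ae_restrict_of_ae h01ae,
        ae_restrict_mem measurableSet_Icc] with t h1 h2 hmem
      exact h1 ⟨lt_of_le_of_ne hmem.1 (Ne.symm h2.1),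
        lt_of_le_of_ne (hmem.2.trans hx.2) h2.2⟩
    have hcint : (∫ _ in (0:ℝ)..x, C) = x * C := by simp
    rw [hcint] at hmono
    linarith
  -- φ'(0) = ψ'(0)
  have hderiv0 : deriv ψ 0 = deriv φ 0 := by
    have hmin : IsLocalMin (fun x => ψ x - φ x) 0 :=
      Filter.Eventually.of_forall fun x => by
        simp only [h0, sub_self]
        linarith [hle x]
    have hd : HasDerivAt (fun x => ψ x - φ x) (deriv ψ 0 - deriv φ 0) 0 :=
      ((hψ_diff 0).hasDerivAt).sub ((hφ_diff 0).hasDerivAt)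
    have := hmin.hasDerivAt_eq_zero hd
    linarith
  -- lower bound for φ' near 0
  obtain ⟨δ, hδpos, hδ⟩ : ∃ δ > (0:ℝ), ∀ α ∈ E, |α| < δ → C + 1 ≤ deriv (deriv φ) α := by
    have hev := hblow.eventually_ge_atTop (C + 1)
    rw [eventually_nhdsWithin_iff, Metric.eventually_nhds_iff] at hev
    obtain ⟨δ, hδpos, h⟩ := hev
    exact ⟨δ, hδpos, fun α hα hαδ => h (by simpa [Real.dist_eq] using hαδ) hα⟩
  set x₀ : ℝ := min (δ / 2) 1 with hx₀def
  have hx₀pos : 0 < x₀ := lt_min (by linarith) one_pos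
  have hx₀le1 : x₀ ≤ 1 := min_le_right _ _
  have hx₀δ : x₀ < δ := lt_of_le_of_lt (min_le_left _ _) (by linarith)
  have hgφ_ge : ∀ᵐ t : ℝ, t ∈ Set.Ioo (0:ℝ) x₀ → C + 1 ≤ gφ t := by
    filter_upwards [haeφ, haeE] with t h1 h2 ht
    have ht1 : t ∈ Set.Ioo (0:ℝ) 1 := ⟨ht.1, lt_of_lt_of_le ht.2 hx₀le1⟩
    have htE : t ∈ E := h2 ⟨ht1.1.le, ht1.2.le⟩
    have : deriv (deriv φ) t = gφ t := (h1 ht1).deriv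
    rw [← this]
    exact hδ t htE (by rw [abs_of_pos ht.1]; exact ht.2.trans hx₀δ)
  have hφ'_ge : ∀ x ∈ Set.Icc (0:ℝ) x₀, deriv φ 0 + (C + 1) * x ≤ deriv φ x := by
    intro x hx
    have hx1 : x ∈ Set.Icc (0:ℝ) 1 := ⟨hx.1, hx.2.trans hx₀le1⟩
    rw [hgφ_rep x hx1]
    have hintx : IntervalIntegrable gφ volume 0 x :=
      hgφ_int.mono_set (by rw [uIcc_of_le hx.1, hIcc01]; exact Set.Icc_subset_Icc le_rfl hx1.2)
    have hxae : ∀ᵐ t : ℝ, t ≠ x := by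
      have hv : volume ({x} : Set ℝ) = 0 := by simp
      filter_upwards [measure_eq_zero_iff_ae_notMem.mp hv] with t ht
      simpa using ht
    have hmono : (∫ _ in (0:ℝ)..x, (C + 1)) ≤ ∫ t in (0:ℝ)..x, gφ t := by
      apply intervalIntegral.integral_mono_ae_restrict hx.1 intervalIntegrable_const hintx
      filter_upwards [ae_restrict_of_ae hgφ_ge, ae_restrict_of_ae h01ae,
        ae_restrict_of_ae hxae, ae_restrict_mem measurableSet_Icc] with t h1 h2 h3 hmem
      exact h1 ⟨lt_of_le_of_ne hmem.1 (Ne.symm h2.1),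
        lt_of_lt_of_le (lt_of_le_of_ne hmem.2 h3) hx.2⟩
    have hcint : (∫ _ in (0:ℝ)..x, (C + 1)) = x * (C + 1) := by simp; ring
    rw [hcint] at hmono
    linarith
  -- combine: ψ' - φ' ≤ -t on [0, x₀]
  have hkey : ∀ t ∈ Set.Icc (0:ℝ) x₀, deriv ψ t - deriv φ t ≤ -t := by
    intro t ht
    have h1 := hψ'_le t ⟨ht.1, ht.2.trans hx₀le1⟩
    have h2 := hφ'_ge t ht
    linarith
  -- integrate over [0, x₀]
  have hIccx₀ : Set.uIcc (0:ℝ) x₀ = Set.Icc 0 x₀ := uIcc_of_le hx₀pos.le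
  have hsub : Set.Icc (0:ℝ) x₀ ⊆ Set.Icc (0:ℝ) 1 := Set.Icc_subset_Icc le_rfl hx₀le1
  have hintψ' : IntervalIntegrable (deriv ψ) volume 0 x₀ := by
    apply ContinuousOn.intervalIntegrable
    rw [hIccx₀]; exact contψ'.mono hsub
  have hintφ' : IntervalIntegrable (deriv φ) volume 0 x₀ := by
    apply ContinuousOn.intervalIntegrable
    rw [hIccx₀]; exact contφ'.mono hsub
  have hFTCψ : (∫ t in (0:ℝ)..x₀, deriv ψ t) = ψ x₀ - ψ 0 :=
    intervalIntegral.integral_deriv_eq_sub (fun t _ => hψ_diff t) hintψ'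
  have hFTCφ : (∫ t in (0:ℝ)..x₀, deriv φ t) = φ x₀ - φ 0 :=
    intervalIntegral.integral_deriv_eq_sub (fun t _ => hφ_diff t) hintφ'
  have hbound : (∫ t in (0:ℝ)..x₀, (deriv ψ t - deriv φ t)) ≤ ∫ t in (0:ℝ)..x₀, (-t) := by
    apply intervalIntegral.integral_mono_on hx₀pos.le (hintψ'.sub hintφ')
      (Continuous.intervalIntegrable continuous_neg 0 x₀)
    exact hkey
  have hsubint : (∫ t in (0:ℝ)..x₀, (deriv ψ t - deriv φ t))
      = (ψ x₀ - ψ 0) - (φ x₀ - φ 0) := by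
    rw [intervalIntegral.integral_sub hintψ' hintφ', hFTCψ, hFTCφ]
  have hneg : (∫ t in (0:ℝ)..x₀, (-t : ℝ)) = -(x₀ ^ 2 / 2) := by
    rw [intervalIntegral.integral_neg, integral_id]
    ring
  rw [hsubint, hneg] at hbound
  have := hle x₀
  nlinarith [hx₀pos]
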